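/- Let cl be a maximal exceptional sequence in Z^r, fix ν, and let B ⊂ Z be a segment, i.e., a maximal run of consecutive integers b with L_b ≠ ∅. Then ℓ_{min(B)} ≤ ℓ_{min(B)+1} and ℓ_{max(B)} ≤ ℓ_{max(B)-1}, where ℓ_c = |L_c|. In particular, every segment has length at least 2. -/

import Mathlib

def IsExceptional {r m : ℕ} (cl : Fin m → (Fin r → ℤ)) : Prop :=
  ∀ i j : Fin m, i < j → ∃ ν : Fin r, cl j ν - cl i ν = 1

def layerCard {r m : ℕ} (cl : Fin m → (Fin r → ℤ)) (ν : Fin r) (c : ℤ) : ℕ :=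
  (Finset.univ.filter fun i => cl i ν = c).card

namespace Stmt10Aux

variable {r : ℕ}

/-- The parity vector of an element. -/
def par (cl : Fin (2 ^ r) → (Fin r → ℤ)) (i : Fin (2 ^ r)) : Fin r → ZMod 2 :=
  fun μ => (cl i μ : ZMod 2)

lemma par_inj (cl : Fin (2 ^ r) → (Fin r → ℤ)) (h : IsExceptional cl) :
    Function.Injective (par cl) := by
  intro i j hij
  by_contra hne
  rcases lt_or_gt_of_ne hne with hlt | hlt
  · obtain ⟨ν', hν'⟩ := h i j hlt
    have h0 : ((cl j ν' - cl i ν' : ℤ) : ZMod 2) = 0 := by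
      have := congrFun hij ν'
      simp only [par] at this
      push_cast
      rw [this]; ring
    rw [hν'] at h0
    norm_num at h0
  · obtain ⟨ν', hν'⟩ := h j i hlt
    have h0 : ((cl i ν' - cl j ν' : ℤ) : ZMod 2) = 0 := by
      have := congrFun hij ν'
      simp only [par] at this
      push_cast
      rw [this]; ring
    rw [hν'] at h0
    norm_num at h0

lemma par_surj (cl : Fin (2 ^ r) → (Fin r → ℤ)) (h : IsExceptional cl) :
    Function.Surjective (par cl) := by
  have hcard : Fintype.card (Fin (2 ^ r)) = Fintype.card (Fin r → ZMod 2) := by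
    simp [ZMod.card]
  exact ((Fintype.bijective_iff_injective_and_card (par cl)).2
    ⟨par_inj cl h, hcard⟩).2

/-- Key lemma: for every i there is a j agreeing with i in parity away from ν,
and whose ν-coordinate differs from that of i by exactly 1. -/
lemma key (cl : Fin (2 ^ r) → (Fin r → ℤ)) (h : IsExceptional cl) (ν : Fin r)
    (i : Fin (2 ^ r)) :
    ∃ j, (∀ μ, μ ≠ ν → ((cl j μ : ZMod 2)) = (cl i μ : ZMod 2)) ∧
      (cl j ν = cl i ν + 1 ∨ cl j ν = cl i ν - 1) := by
  obtain ⟨j, hj⟩ := par_surj cl h (Function.update (par cl i) ν (par cl i ν + 1))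
  have hpar : ∀ μ, μ ≠ ν → ((cl j μ : ZMod 2)) = (cl i μ : ZMod 2) := by
    intro μ hμ
    have := congrFun hj μ
    simpa [par, Function.update, hμ] using this
  have hν2 : (par cl j) ν = par cl i ν + 1 := by
    have := congrFun hj ν
    simpa [Function.update] using this
  have hne : j ≠ i := by
    intro e
    rw [e] at hν2
    exact one_ne_zero (by linear_combination -hν2 : (1 : ZMod 2) = 0)
  refine ⟨j, hpar, ?_⟩
  have hνν : ∀ ν' : Fin r, ((cl j ν' - cl i ν' : ℤ) : ZMod 2) ≠ 0 → ν' = ν := by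
    intro ν' hν'
    by_contra hc
    apply hν'
    have := hpar ν' hc
    push_cast
    rw [this]; ring
  rcases lt_or_gt_of_ne hne with hlt | hlt
  · obtain ⟨ν', hd⟩ := h j i hlt
    have : ν' = ν := by
      apply hνν
      have : ((cl j ν' - cl i ν' : ℤ) : ZMod 2) = ((-1 : ℤ) : ZMod 2) := by
        congr 1; linarith
      rw [this]; decide
    right; rw [← this]; linarith [hd]
  · obtain ⟨ν', hd⟩ := h i j hlt
    have : ν' = ν := by
      apply hνν
      rw [hd]; decide
    left; rw [← this]; linarith [hd]

lemma layer_empty {m : ℕ} (cl : Fin m → (Fin r → ℤ)) (ν : Fin r) (c : ℤ)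
    (hc : layerCard cl ν c = 0) : ∀ i, cl i ν ≠ c := by
  intro i hi
  have := Finset.card_eq_zero.mp hc
  have hmem : i ∈ Finset.univ.filter fun i => cl i ν = c := by
    simp [hi]
  rw [this] at hmem
  exact absurd hmem (Finset.notMem_empty i)

lemma step_up (cl : Fin (2 ^ r) → (Fin r → ℤ)) (h : IsExceptional cl) (ν : Fin r)
    (c : ℤ) (hc : layerCard cl ν (c - 1) = 0) :
    layerCard cl ν c ≤ layerCard cl ν (c + 1) := by
  choose f hpar hval using key cl h ν
  apply Finset.card_le_card_of_injOn f
  · intro i hi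
    simp only [Finset.coe_filter, Set.mem_setOf_eq, Finset.mem_coe, Finset.mem_filter, Finset.mem_univ, true_and] at hi ⊢
    rcases hval i with h1 | h1
    · rw [h1, hi]
    · exfalso
      exact layer_empty cl ν (c - 1) hc (f i) (by rw [h1, hi])
  · intro i₁ h₁ i₂ h₂ hf
    simp only [Finset.coe_filter, Finset.mem_univ, true_and, Set.mem_setOf_eq] at h₁ h₂
    apply par_inj cl h
    funext μ
    by_cases hμ : μ = ν
    · subst hμ
      simp [par, h₁, h₂]
    · have e1 := hpar i₁ μ hμ
      have e2 := hpar i₂ μ hμ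
      simp only [par]
      rw [← e1, ← e2, hf]

lemma step_down (cl : Fin (2 ^ r) → (Fin r → ℤ)) (h : IsExceptional cl) (ν : Fin r)
    (c : ℤ) (hc : layerCard cl ν (c + 1) = 0) :
    layerCard cl ν c ≤ layerCard cl ν (c - 1) := by
  choose f hpar hval using key cl h ν
  apply Finset.card_le_card_of_injOn f
  · intro i hi
    simp only [Finset.coe_filter, Set.mem_setOf_eq, Finset.mem_coe, Finset.mem_filter, Finset.mem_univ, true_and] at hi ⊢
    rcases hval i with h1 | h1
    · exfalso
      exact layer_empty cl ν (c + 1) hc (f i) (by rw [h1, hi])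
    · rw [h1, hi]
  · intro i₁ h₁ i₂ h₂ hf
    simp only [Finset.coe_filter, Finset.mem_univ, true_and, Set.mem_setOf_eq] at h₁ h₂
    apply par_inj cl h
    funext μ
    by_cases hμ : μ = ν
    · subst hμ
      simp [par, h₁, h₂]
    · have e1 := hpar i₁ μ hμ
      have e2 := hpar i₂ μ hμ
      simp only [par]
      rw [← e1, ← e2, hf]

end Stmt10Aux

theorem stmt_10 {r : ℕ} (cl : Fin (2 ^ r) → (Fin r → ℤ)) (h : IsExceptional cl)
    (ν : Fin r) (lo hi : ℤ) (hle : lo ≤ hi)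
    (hseg : ∀ c : ℤ, lo ≤ c → c ≤ hi → layerCard cl ν c ≠ 0)
    (hlo : layerCard cl ν (lo - 1) = 0) (hhi : layerCard cl ν (hi + 1) = 0) :
    layerCard cl ν lo ≤ layerCard cl ν (lo + 1) ∧
    layerCard cl ν hi ≤ layerCard cl ν (hi - 1) ∧
    lo + 1 ≤ hi := by
  refine ⟨Stmt10Aux.step_up cl h ν lo hlo, Stmt10Aux.step_down cl h ν hi hhi, ?_⟩
  by_contra hc
  have heq : lo = hi := by omega
  subst heq
  have hne : layerCard cl ν lo ≠ 0 := hseg lo le_rfl le_rfl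
  obtain ⟨i, hi⟩ : ∃ i, cl i ν = lo := by
    by_contra hno
    push_neg at hno
    apply hne
    rw [layerCard, Finset.card_eq_zero, Finset.eq_empty_iff_forall_notMem]
    intro i hi
    simp only [Finset.mem_filter] at hi
    exact hno i hi.2
  obtain ⟨j, _, hval⟩ := Stmt10Aux.key cl h ν i
  rcases hval with h1 | h1
  · exact Stmt10Aux.layer_empty cl ν (lo + 1) hhi j (by rw [h1, hi])
  · exact Stmt10Aux.layer_empty cl ν (lo - 1) hlo j (by rw [h1, hi])
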